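/- For every integer n ≥ 1, every complex zero of G_n lies in the open left half-plane: if z is outside {−b_k : k ≥ 1} and z + n² K(z) = 0, then Re z < 0. -/

import Mathlib

open Filter Topology

/- Indexing convention: the paper's sequences `(a_k)_{k ≥ 1}`, `(b_k)_{k ≥ 1}` are
encoded as functions `a b : ℕ → ℝ`, where index `k : ℕ` corresponds to the paper's
index `k + 1` (so `b 0 = b_1`, etc.). -/

/-- `GPK a b z = K(z) = ∑ a_k / (z + b_k)`. -/
noncomputable def GPK (a b : ℕ → ℝ) (z : ℂ) : ℂ := ∑' k : ℕ, (a k : ℂ) / (z + (b k : ℂ))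

/-- `GPG a b n z = G_n(z) = z + n² K(z)`. -/
noncomputable def GPG (a b : ℕ → ℝ) (n : ℕ) (z : ℂ) : ℂ := z + (n : ℂ) ^ 2 * GPK a b z

/-- Every zero of `G_n` lies in the open left half plane. -/
theorem spectrum_in_left_half_plane
    (a b : ℕ → ℝ) (α : ℝ)
    (ha : ∀ k, 0 < a k) (hα : 0 < α) (hsum : HasSum a (α ^ 2))
    (hb0 : 0 ≤ b 0) (hbmono : StrictMono b) (hbtop : Tendsto b atTop atTop)
    (n : ℕ) (hn : 1 ≤ n)
    (z : ℂ) (hz : ∀ k, z ≠ -(b k : ℂ)) (hzero : GPG a b n z = 0) :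
    z.re < 0 := by
  by_contra hre
  push_neg at hre
  -- basic facts
  have hbnn : ∀ k, 0 ≤ b k := fun k => hb0.trans (hbmono.monotone (Nat.zero_le k))
  have hwne : ∀ k, z + (b k : ℂ) ≠ 0 := by
    intro k h
    exact hz k (by linear_combination h)
  have hnsq : ∀ k, 0 < Complex.normSq (z + (b k : ℂ)) := fun k =>
    Complex.normSq_pos.mpr (hwne k)
  -- summability of the series for K(z)
  have hsa : Summable a := hsum.summable
  have hSummable : Summable (fun k => (a k : ℂ) / (z + (b k : ℂ))) := by
    apply Summable.of_norm_bounded_eventually hsa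
    have h1 : ∀ᶠ k in atTop, 1 ≤ b k := hbtop.eventually_ge_atTop 1
    rw [Nat.cofinite_eq_atTop]
    filter_upwards [h1] with k hk
    rw [norm_div]
    have hzn : (1 : ℝ) ≤ ‖z + (b k : ℂ)‖ := by
      calc (1:ℝ) ≤ b k := hk
        _ ≤ z.re + b k := by linarith
        _ = (z + (b k : ℂ)).re := by simp
        _ ≤ |(z + (b k : ℂ)).re| := le_abs_self _
        _ ≤ ‖z + (b k : ℂ)‖ := Complex.abs_re_le_norm _
    rw [div_le_iff₀ (lt_of_lt_of_le one_pos hzn)]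
    have := (ha k).le
    simp only [Complex.norm_real, Real.norm_eq_abs, abs_of_nonneg this]
    nlinarith
  -- real parts of terms
  have hterm_re : ∀ k, ((a k : ℂ) / (z + (b k : ℂ))).re
      = a k * (z.re + b k) / Complex.normSq (z + (b k : ℂ)) := by
    intro k
    rw [Complex.div_re]
    simp [mul_div_assoc]
  have hterm_nonneg : ∀ k, 0 ≤ ((a k : ℂ) / (z + (b k : ℂ))).re := by
    intro k
    rw [hterm_re k]
    have h1 := (ha k).le
    have h2 := hbnn k
    have h3 := (hnsq k).le
    apply div_nonneg (mul_nonneg h1 (by linarith)) h3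
  have hterm_pos : 0 < ((a 1 : ℂ) / (z + (b 1 : ℂ))).re := by
    rw [hterm_re 1]
    have hb1 : 0 < b 1 := lt_of_le_of_lt hb0 (hbmono Nat.zero_lt_one)
    exact div_pos (mul_pos (ha 1) (by linarith)) (hnsq 1)
  -- real part of K(z)
  have hSre : Summable (fun k => ((a k : ℂ) / (z + (b k : ℂ))).re) :=
    (Complex.hasSum_re hSummable.hasSum).summable
  have hKre : 0 < (GPK a b z).re := by
    rw [GPK, Complex.re_tsum hSummable]
    exact Summable.tsum_pos hSre hterm_nonneg 1 hterm_pos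
  -- take real part of the zero equation
  have h0 : (GPG a b n z).re = 0 := by rw [hzero]; simp
  rw [GPG] at h0
  have hnpos : (0:ℝ) < (n:ℝ)^2 := by positivity
  have : (z + (n : ℂ) ^ 2 * GPK a b z).re = z.re + (n:ℝ)^2 * (GPK a b z).re := by
    simp [Complex.add_re, Complex.mul_re, pow_two, Complex.mul_im]
  rw [this] at h0
  nlinarith
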